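/- Let (Y, ℬ) be a measurable space, (T_j)_{j≥1} measurable maps of Y to itself, and (μ_j)_{j≥0} Borel probability measures on Y satisfying the equivariance relations (T_{j+1})_* μ_j = μ_{j+1} for every j ≥ 0. For a measurable set U ⊆ Y and j ≥ 0 define the hitting time started at time j by R^{(j)}_U(x) := inf{ k ≥ 1 : (T_{j+k} ∘ ⋯ ∘ T_{j+1})(x) ∈ U }. Assume μ_j(U) > 0 for all j ≥ 1, and set c_j(k,U) := | μ_j(R^{(j)}_U > k | U) − μ_j(R^{(j)}_U > k) | where μ_j(A|U) := μ_j(A ∩ U)/μ_j(U), and c_j(U) := sup_{k≥0} c_j(k,U). Then for every k ≥ 1: | μ_0(R^{(0)}_U > k) − ∏_{j=1}^{k} (1 − μ_j(U)) | ≤ Σ_{j=1}^{k} μ_j(U) · c_j(k−j, U) · ∏_{i=1}^{j−1} (1 − μ_i(U)) ≤ Σ_{j=1}^{k} μ_j(U) · c_j(U). -/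
import Mathlib


open MeasureTheory Filter Set Topology

noncomputable section

variable {Y : Type*}

/-- The composition `T_{j+k} ∘ ⋯ ∘ T_{j+1}` of a sequence of maps, started after time `j`. -/
def seqCompFrom (T : ℕ → Y → Y) (j : ℕ) : ℕ → Y → Y
  | 0 => id
  | k + 1 => T (j + k + 1) ∘ seqCompFrom T j k

/-- The event `{R^{(j)}_U > k}`: no entry into `U` within the first `k` steps after time `j`. -/
def survFrom (T : ℕ → Y → Y) (j : ℕ) (U : Set Y) (k : ℕ) : Set Y :=
  {x | ∀ i, 1 ≤ i → i ≤ k → seqCompFrom T j i x ∉ U}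

/-- `c_j(k,U) = |μ_j(R^{(j)}_U > k | U) − μ_j(R^{(j)}_U > k)|`. -/
def hitCoeff (T : ℕ → Y → Y) [MeasurableSpace Y] (μ : ℕ → Measure Y) (U : Set Y)
    (j k : ℕ) : ℝ :=
  |(μ j (survFrom T j U k ∩ U)).toReal / (μ j U).toReal - (μ j (survFrom T j U k)).toReal|

lemma seqCompFrom_shift (T : ℕ → Y → Y) (j : ℕ) :
    ∀ m x, seqCompFrom T j (m + 1) x = seqCompFrom T (j + 1) m (T (j + 1) x) := by
  intro m
  induction m with
  | zero => intro x; simp [seqCompFrom]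
  | succ m ih =>
      intro x
      have h1 : j + (m + 1) + 1 = (j + 1) + m + 1 := by omega
      show T (j + (m + 1) + 1) (seqCompFrom T j (m + 1) x) = _
      rw [ih x, h1]
      rfl

lemma measurable_seqCompFrom {T : ℕ → Y → Y} [MeasurableSpace Y]
    (hT : ∀ j, Measurable (T j)) (j k : ℕ) : Measurable (seqCompFrom T j k) := by
  induction k with
  | zero => exact measurable_id
  | succ k ih => exact (hT _).comp ih

lemma measurableSet_survFrom {T : ℕ → Y → Y} [MeasurableSpace Y]
    (hT : ∀ j, Measurable (T j)) {U : Set Y} (hU : MeasurableSet U) (j k : ℕ) :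
    MeasurableSet (survFrom T j U k) := by
  have : survFrom T j U k = ⋂ i ∈ Finset.Icc 1 k, (seqCompFrom T j i) ⁻¹' Uᶜ := by
    ext x
    simp only [survFrom, Set.mem_setOf_eq, Set.mem_iInter, Finset.mem_Icc,
      Set.mem_preimage, Set.mem_compl_iff, Finset.mem_coe]
    tauto
  rw [this]
  exact MeasurableSet.biInter (Finset.Icc 1 k).countable_toSet
    fun i _ => (measurable_seqCompFrom hT j i) hU.compl

lemma survFrom_zero (T : ℕ → Y → Y) (j : ℕ) (U : Set Y) :
    survFrom T j U 0 = Set.univ := by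
  ext x; simp [survFrom]; omega

lemma survFrom_succ (T : ℕ → Y → Y) (j : ℕ) (U : Set Y) (k : ℕ) :
    survFrom T j U (k + 1) = T (j + 1) ⁻¹' (survFrom T (j + 1) U k \ U) := by
  ext x
  constructor
  · intro h
    refine ⟨fun i h1 hk => ?_, ?_⟩
    · rw [← seqCompFrom_shift T j i x]
      exact h (i + 1) (by omega) (by omega)
    · have := h 1 le_rfl (by omega)
      simpa [seqCompFrom] using this
  · rintro ⟨h1, h2⟩ i hi hik
    obtain ⟨m, rfl⟩ : ∃ m, i = m + 1 := ⟨i - 1, by omega⟩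
    rw [seqCompFrom_shift T j m]
    rcases Nat.eq_zero_or_pos m with rfl | hm
    · simpa [seqCompFrom] using h2
    · exact h1 m hm (by omega)

lemma measure_survFrom_succ {T : ℕ → Y → Y} [MeasurableSpace Y]
    (hT : ∀ j, Measurable (T j)) (μ : ℕ → Measure Y)
    (hequiv : ∀ j : ℕ, (μ j).map (T (j + 1)) = μ (j + 1))
    {U : Set Y} (hU : MeasurableSet U) (j k : ℕ) :
    μ j (survFrom T j U (k + 1)) = μ (j + 1) (survFrom T (j + 1) U k \ U) := by
  rw [survFrom_succ, ← hequiv j,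
    Measure.map_apply (hT (j + 1)) ((measurableSet_survFrom hT hU _ _).diff hU)]


lemma key_lemma [MeasurableSpace Y]
    (T : ℕ → Y → Y) (hT : ∀ j, Measurable (T j))
    (μ : ℕ → Measure Y) (hprob : ∀ j, IsProbabilityMeasure (μ j))
    (hequiv : ∀ j : ℕ, (μ j).map (T (j + 1)) = μ (j + 1))
    (U : Set Y) (hU : MeasurableSet U)
    (hUpos : ∀ j, 1 ≤ j → 0 < μ j U) :
    ∀ k j, |(μ j (survFrom T j U k)).toReal -
        ∏ i ∈ Finset.range k, (1 - (μ (j + 1 + i) U).toReal)| ≤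
      ∑ i ∈ Finset.range k, (μ (j + 1 + i) U).toReal * hitCoeff T μ U (j + 1 + i) (k - 1 - i) *
        ∏ m ∈ Finset.range i, (1 - (μ (j + 1 + m) U).toReal) := by
  intro k
  induction k with
  | zero =>
      intro j
      haveI := hprob j
      simp [survFrom_zero]
  | succ k ih =>
      intro j
      haveI := hprob (j + 1)
      set p : ℝ := (μ (j + 1) U).toReal with hp
      set S : Set Y := survFrom T (j + 1) U k with hS
      set a : ℝ := (μ (j + 1) S).toReal with ha
      set b : ℝ := (μ (j + 1) (S ∩ U)).toReal with hb
      have hpnt : μ (j + 1) U ≠ ⊤ := measure_ne_top _ _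
      have hp0 : 0 < p := ENNReal.toReal_pos (hUpos (j + 1) (by omega)).ne' hpnt
      have hp1 : p ≤ 1 := by
        have := ENNReal.toReal_mono (by simp) (prob_le_one (μ := μ (j + 1)) (s := U))
        simpa [hp] using this
      -- measure recursion
      have hsplit : μ (j + 1) (S ∩ U) + μ (j + 1) (S \ U) = μ (j + 1) S :=
        measure_inter_add_diff S hU
      have hsurv : (μ j (survFrom T j U (k + 1))).toReal = a - b := by
        rw [measure_survFrom_succ hT μ hequiv hU]
        have := congrArg ENNReal.toReal hsplit
        rw [ENNReal.toReal_add (measure_ne_top _ _) (measure_ne_top _ _)] at this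
        rw [← hS, ha, hb]
        linarith [this]
      have hidx1 : ∀ i : ℕ, j + 1 + (i + 1) = j + 1 + 1 + i := fun i => by omega
      rw [hsurv, Finset.prod_range_succ', Finset.sum_range_succ']
      simp only [Nat.add_zero, Nat.sub_zero, Nat.add_sub_cancel, Finset.prod_range_zero,
        mul_one]
      set P : ℝ := ∏ i ∈ Finset.range k, (1 - (μ (j + 1 + 1 + i) U).toReal) with hP
      set R : ℝ := ∑ i ∈ Finset.range k, (μ (j + 1 + 1 + i) U).toReal *
        hitCoeff T μ U (j + 1 + 1 + i) (k - 1 - i) *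
        ∏ m ∈ Finset.range i, (1 - (μ (j + 1 + 1 + m) U).toReal) with hR
      have IH : |a - P| ≤ R := ih (j + 1)
      have e1 : (∏ i ∈ Finset.range k, (1 - (μ (j + 1 + (i + 1)) U).toReal)) = P := by
        rw [hP]; exact Finset.prod_congr rfl fun i _ => by rw [hidx1 i]
      have e2 : (∑ i ∈ Finset.range k, (μ (j + 1 + (i + 1)) U).toReal *
          hitCoeff T μ U (j + 1 + (i + 1)) (k - (i + 1)) *
          ∏ m ∈ Finset.range (i + 1), (1 - (μ (j + 1 + m) U).toReal)) = (1 - p) * R := by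
        rw [hR, Finset.mul_sum]
        refine Finset.sum_congr rfl fun i _ => ?_
        rw [Finset.prod_range_succ']
        have e3 : (∏ m ∈ Finset.range i, (1 - (μ (j + 1 + (m + 1)) U).toReal)) =
            ∏ m ∈ Finset.range i, (1 - (μ (j + 1 + 1 + m) U).toReal) :=
          Finset.prod_congr rfl fun m _ => by rw [hidx1 m]
        rw [e3, hidx1 i, (by omega : k - (i + 1) = k - 1 - i)]
        simp only [Nat.add_zero, Finset.prod_range_zero]
        rw [← hp]
        ring
      rw [e1, e2]
      have hhc : hitCoeff T μ U (j + 1) k = |b / p - a| := rfl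
      have halg : a - b - P * (1 - p) = (1 - p) * (a - P) - p * (b / p - a) := by
        field_simp
        ring
      rw [← hp, halg, hhc]
      have h1 : |(1 - p) * (a - P) - p * (b / p - a)| ≤
          (1 - p) * |a - P| + p * |b / p - a| := by
        calc |(1 - p) * (a - P) - p * (b / p - a)|
            ≤ |(1 - p) * (a - P)| + |p * (b / p - a)| := abs_sub _ _
          _ = (1 - p) * |a - P| + p * |b / p - a| := by
              rw [abs_mul, abs_mul, abs_of_nonneg (by linarith : (0:ℝ) ≤ 1 - p),
                abs_of_nonneg hp0.le]
      refine h1.trans ?_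
      have := mul_le_mul_of_nonneg_left IH (by linarith : (0:ℝ) ≤ 1 - p)
      linarith

theorem stmt0 [MeasurableSpace Y]
    (T : ℕ → Y → Y) (hT : ∀ j, Measurable (T j))
    (μ : ℕ → Measure Y) (hprob : ∀ j, IsProbabilityMeasure (μ j))
    (hequiv : ∀ j : ℕ, (μ j).map (T (j + 1)) = μ (j + 1))
    (U : Set Y) (hU : MeasurableSet U)
    (hUpos : ∀ j, 1 ≤ j → 0 < μ j U) :
    ∀ k : ℕ, 1 ≤ k →
      |(μ 0 (survFrom T 0 U k)).toReal -
          ∏ j ∈ Finset.Icc 1 k, (1 - (μ j U).toReal)| ≤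
        ∑ j ∈ Finset.Icc 1 k, (μ j U).toReal * hitCoeff T μ U j (k - j) *
          ∏ i ∈ Finset.Icc 1 (j - 1), (1 - (μ i U).toReal) ∧
      ∑ j ∈ Finset.Icc 1 k, (μ j U).toReal * hitCoeff T μ U j (k - j) *
          ∏ i ∈ Finset.Icc 1 (j - 1), (1 - (μ i U).toReal) ≤
        ∑ j ∈ Finset.Icc 1 k, (μ j U).toReal * (⨆ k' : ℕ, hitCoeff T μ U j k') := by
  intro k hk
  constructor
  · have key := key_lemma T hT μ hprob hequiv U hU hUpos k 0
    have ep : ∏ j ∈ Finset.Icc 1 k, (1 - (μ j U).toReal) =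
        ∏ i ∈ Finset.range k, (1 - (μ (0 + 1 + i) U).toReal) := by
      rw [← Finset.Ico_add_one_right_eq_Icc, Finset.prod_Ico_eq_prod_range]
      refine Finset.prod_congr (by norm_num) fun i _ => by norm_num
    have es : ∑ j ∈ Finset.Icc 1 k, (μ j U).toReal * hitCoeff T μ U j (k - j) *
        ∏ i ∈ Finset.Icc 1 (j - 1), (1 - (μ i U).toReal) =
        ∑ i ∈ Finset.range k, (μ (0 + 1 + i) U).toReal *
          hitCoeff T μ U (0 + 1 + i) (k - 1 - i) *
          ∏ m ∈ Finset.range i, (1 - (μ (0 + 1 + m) U).toReal) := by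
      rw [← Finset.Ico_add_one_right_eq_Icc, Finset.sum_Ico_eq_sum_range]
      refine Finset.sum_congr (by norm_num) fun i _ => ?_
      rw [(by omega : k - (1 + i) = k - 1 - i), (by omega : 1 + i - 1 = i),
        ← Finset.Ico_add_one_right_eq_Icc, Finset.prod_Ico_eq_prod_range]
      norm_num
    rw [ep, es]
    exact key
  · refine Finset.sum_le_sum fun j hj => ?_
    have hj1 : 1 ≤ j := (Finset.mem_Icc.mp hj).1
    haveI := hprob j
    have hp0 : 0 < (μ j U).toReal :=
      ENNReal.toReal_pos (hUpos j hj1).ne' (measure_ne_top _ _)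
    have hp1 : ∀ i, (μ i U).toReal ≤ 1 := fun i => by
      haveI := hprob i
      have := ENNReal.toReal_mono (by simp) (prob_le_one (μ := μ i) (s := U))
      simpa using this
    have hcbound : ∀ k', hitCoeff T μ U j k' ≤ 1 := by
      intro k'
      have hq : (μ j (survFrom T j U k' ∩ U)).toReal ≤ (μ j U).toReal :=
        ENNReal.toReal_mono (measure_ne_top _ _) (measure_mono Set.inter_subset_right)
      have hq0 : 0 ≤ (μ j (survFrom T j U k' ∩ U)).toReal := ENNReal.toReal_nonneg
      have hs0 : 0 ≤ (μ j (survFrom T j U k')).toReal := ENNReal.toReal_nonneg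
      have hs1 : (μ j (survFrom T j U k')).toReal ≤ 1 := by
        have := ENNReal.toReal_mono (by simp)
          (prob_le_one (μ := μ j) (s := survFrom T j U k'))
        simpa using this
      have hdiv1 : (μ j (survFrom T j U k' ∩ U)).toReal / (μ j U).toReal ≤ 1 :=
        (div_le_one hp0).mpr hq
      have hdiv0 : 0 ≤ (μ j (survFrom T j U k' ∩ U)).toReal / (μ j U).toReal :=
        div_nonneg hq0 hp0.le
      rw [hitCoeff, abs_le]
      constructor <;> linarith
    have bdd : BddAbove (Set.range fun k' => hitCoeff T μ U j k') := by
      refine ⟨1, ?_⟩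
      rintro _ ⟨k', rfl⟩
      exact hcbound k'
    have hle : hitCoeff T μ U j (k - j) ≤ ⨆ k', hitCoeff T μ U j k' := le_ciSup bdd _
    have hprod1 : ∏ i ∈ Finset.Icc 1 (j - 1), (1 - (μ i U).toReal) ≤ 1 :=
      Finset.prod_le_one (fun i _ => by linarith [hp1 i])
        (fun i _ => by linarith [ENNReal.toReal_nonneg (a := μ i U)])
    have h2 : (μ j U).toReal * hitCoeff T μ U j (k - j) *
        ∏ i ∈ Finset.Icc 1 (j - 1), (1 - (μ i U).toReal) ≤
        (μ j U).toReal * hitCoeff T μ U j (k - j) :=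
      mul_le_of_le_one_right (mul_nonneg hp0.le (abs_nonneg _)) hprod1
    have h3 : (μ j U).toReal * hitCoeff T μ U j (k - j) ≤
        (μ j U).toReal * ⨆ k', hitCoeff T μ U j k' :=
      mul_le_mul_of_nonneg_left hle hp0.le
    exact h2.trans h3
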